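/- For the SEIR model with c(t) = γν(e^{-(μ+δ)t} - e^{-(μ+ν)t})/(ν-δ), the solution to ∫₀^∞ e^{-αt} c(t) dt = 1 is α = -(μ + (δ+ν)/2) + sqrt((δ-ν)²/4 + γν), provided α + μ + δ > 0 and α + μ + ν > 0. -/

import Mathlib

open MeasureTheory Real Set Filter

lemma seir_exp_int {b : ℝ} (hb : 0 < b) :
    ∫ x in Set.Ioi (0:ℝ), Real.exp (-(b * x)) = 1 / b := by
  have hderiv : ∀ x ∈ Ici (0:ℝ), HasDerivAt (fun x => -Real.exp (-(b*x)) / b)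
      (Real.exp (-(b*x))) x := by
    intro x _
    have h : HasDerivAt (fun x => Real.exp (-(b*x))) (Real.exp (-(b*x)) * (-b)) x := by
      exact (Real.hasDerivAt_exp _).comp x (by simpa using (hasDerivAt_id x).const_mul (-b))
    convert (h.neg.div_const b) using 1
    · rfl
    · rfl
    · rfl
    · field_simp
  have hint : IntegrableOn (fun x => Real.exp (-(b*x))) (Ioi (0:ℝ)) := by
    simpa [neg_mul] using exp_neg_integrableOn_Ioi 0 hb
  have htend : Tendsto (fun x => -Real.exp (-(b*x)) / b) atTop (nhds 0) := by
    have : Tendsto (fun x : ℝ => -(b*x)) atTop atBot :=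
      tendsto_neg_atBot_iff.mpr (tendsto_id.const_mul_atTop hb)
    have := (Real.tendsto_exp_atBot.comp this).neg.div_const b
    simpa using this
  have := integral_Ioi_of_hasDerivAt_of_tendsto' hderiv hint htend
  simp at this
  rw [this]; ring

/-- For the SEIR model with `c(t) = γν(e^{-(μ+δ)t} - e^{-(μ+ν)t})/(ν-δ)`,
the solution of `∫₀^∞ e^{-αt} c(t) dt = 1` is
`α = -(μ + (δ+ν)/2) + sqrt((δ-ν)²/4 + γν)`, provided `α+μ+δ > 0` and `α+μ+ν > 0`. -/
theorem seir_malthusian (γ δ μ ν : ℝ) (hγ : 0 < γ) (hδ : 0 < δ) (hμ : 0 < μ)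
    (hν : 0 < ν) (hne : ν ≠ δ) (α : ℝ) (h1 : α + μ + δ > 0) (h2 : α + μ + ν > 0) :
    (∫ t in Set.Ioi (0 : ℝ), Real.exp (-α * t) *
        (γ * ν * (Real.exp (-(μ + δ) * t) - Real.exp (-(μ + ν) * t)) / (ν - δ))) = 1 ↔
      α = -(μ + (δ + ν) / 2) + Real.sqrt ((δ - ν) ^ 2 / 4 + γ * ν) := by
  have hνδ : ν - δ ≠ 0 := sub_ne_zero.mpr hne
  have key : (∫ t in Set.Ioi (0 : ℝ), Real.exp (-α * t) *
        (γ * ν * (Real.exp (-(μ + δ) * t) - Real.exp (-(μ + ν) * t)) / (ν - δ)))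
      = γ * ν / (ν - δ) * (1 / (α + μ + δ) - 1 / (α + μ + ν)) := by
    have heq : ∀ t : ℝ, Real.exp (-α * t) *
        (γ * ν * (Real.exp (-(μ + δ) * t) - Real.exp (-(μ + ν) * t)) / (ν - δ))
        = γ * ν / (ν - δ) *
          (Real.exp (-((α + μ + δ) * t)) - Real.exp (-((α + μ + ν) * t))) := by
      intro t
      rw [show -((α + μ + δ) * t) = -α * t + -(μ + δ) * t by ring,
        show -((α + μ + ν) * t) = -α * t + -(μ + ν) * t by ring,
        Real.exp_add, Real.exp_add]
      ring
    rw [show (fun t : ℝ => Real.exp (-α * t) *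
        (γ * ν * (Real.exp (-(μ + δ) * t) - Real.exp (-(μ + ν) * t)) / (ν - δ)))
        = fun t : ℝ => γ * ν / (ν - δ) *
          (Real.exp (-((α + μ + δ) * t)) - Real.exp (-((α + μ + ν) * t)))
      from funext heq]
    rw [integral_const_mul, integral_sub, seir_exp_int h1, seir_exp_int h2]
    · simpa only [neg_mul, IntegrableOn] using exp_neg_integrableOn_Ioi 0 h1
    · simpa only [neg_mul, IntegrableOn] using exp_neg_integrableOn_Ioi 0 h2
  rw [key]
  have hquad : γ * ν / (ν - δ) * (1 / (α + μ + δ) - 1 / (α + μ + ν)) = 1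
      ↔ (α + μ + δ) * (α + μ + ν) = γ * ν := by
    rw [div_mul_eq_mul_div, div_eq_one_iff_eq hνδ]
    constructor
    · intro h
      field_simp at h
      have h' : (ν - δ) * (γ * ν) = (ν - δ) * ((α + μ + δ) * (α + μ + ν)) := by linarith
      have := mul_left_cancel₀ hνδ h'
      linarith
    · intro h
      field_simp
      nlinarith [h]
  rw [hquad]
  have hs : Real.sqrt ((δ - ν) ^ 2 / 4 + γ * ν) ^ 2 = (δ - ν) ^ 2 / 4 + γ * ν :=
    Real.sq_sqrt (by positivity)
  constructor
  · intro h
    have hx : α + μ + (δ + ν) / 2 > 0 := by linarith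
    have hx2 : (α + μ + (δ + ν) / 2) ^ 2 = (δ - ν) ^ 2 / 4 + γ * ν := by nlinarith [h]
    have : Real.sqrt ((δ - ν) ^ 2 / 4 + γ * ν) = α + μ + (δ + ν) / 2 := by
      rw [← hx2]; exact Real.sqrt_sq hx.le
    linarith
  · intro h
    nlinarith [hs, h]
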